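/- Let u ∈ Hˢ(ℝ^N) and a ∈ ℝ. Then the Gagliardo seminorm does not increase under polarization: ∬_{ℝ^N×ℝ^N}|u(x)-u(y)|²/|x-y|^{N+2s} dxdy ≥ ∬_{ℝ^N×ℝ^N}|(P_a u)(x)-(P_a u)(y)|²/|x-y|^{N+2s} dxdy; in particular P_a u ∈ Hˢ(ℝ^N). -/

import Mathlib

open MeasureTheory

/-- Reflection of `x` across the hyperplane `{x₁ = a}`. -/
noncomputable def reflA {N : ℕ} [NeZero N] (a : ℝ) (x : EuclideanSpace ℝ (Fin N)) :
    EuclideanSpace ℝ (Fin N) :=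
  WithLp.toLp 2 (fun i => if i = 0 then 2 * a - x 0 else x i)

/-- Polarization of `u` with respect to the hyperplane `{x₁ = a}`. -/
noncomputable def pol {N : ℕ} [NeZero N] (a : ℝ) (u : EuclideanSpace ℝ (Fin N) → ℝ)
    (x : EuclideanSpace ℝ (Fin N)) : ℝ :=
  if a ≤ x 0 then min (u x) (u (reflA a x)) else max (u x) (u (reflA a x))

/-- The Gagliardo seminorm (squared), as an extended-real double integral. -/
noncomputable def gag (N : ℕ) (s : ℝ) (u : EuclideanSpace ℝ (Fin N) → ℝ) : ENNReal :=
  ∫⁻ x, ∫⁻ y, ENNReal.ofReal ((u x - u y) ^ 2 / ‖x - y‖ ^ ((N : ℝ) + 2 * s))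

section Aux

variable {N : ℕ} [NeZero N] (a : ℝ)

/-! ### Basic properties of the reflection -/

lemma reflA_reflA (x : EuclideanSpace ℝ (Fin N)) : reflA a (reflA a x) = x := by
  ext i
  by_cases h : i = 0
  · subst h; simp [reflA]
  · simp [reflA, h]

lemma reflA_zero (x : EuclideanSpace ℝ (Fin N)) : reflA a x 0 = 2 * a - x 0 := by
  simp [reflA]

lemma reflA_apply (x : EuclideanSpace ℝ (Fin N)) (i : Fin N) :
    reflA a x i = if i = 0 then 2 * a - x 0 else x i := rfl

lemma reflA_measurePreserving :
    MeasurePreserving (reflA (N := N) a) volume volume := by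
  classical
  have e := EuclideanSpace.volume_preserving_symm_measurableEquiv_toLp (Fin N)
  set f : Fin N → ℝ → ℝ := fun i => if i = 0 then (fun t => 2 * a - t) else id with hf
  have hfi : ∀ i, MeasurePreserving (f i) volume volume := by
    intro i
    by_cases h : i = 0
    · simpa [hf, h] using Measure.measurePreserving_sub_left (volume : Measure ℝ) (2 * a)
    · simpa [hf, h] using MeasurePreserving.id (volume : Measure ℝ)
  have hpi : MeasurePreserving (fun (x : Fin N → ℝ) i => f i (x i)) volume volume :=
    volume_preserving_pi hfi
  have hcomp : reflA (N := N) a =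
      (MeasurableEquiv.toLp 2 (Fin N → ℝ)).symm.symm ∘ (fun x i => f i (x i)) ∘
        (MeasurableEquiv.toLp 2 (Fin N → ℝ)).symm := by
    funext x
    ext i
    by_cases h : i = 0
    · subst h
      simp [reflA, hf, MeasurableEquiv.coe_toLp,
        MeasurableEquiv.coe_toLp_symm]
    · simp [reflA, hf, h, MeasurableEquiv.coe_toLp,
        MeasurableEquiv.coe_toLp_symm]
  rw [hcomp]
  exact (e.symm (MeasurableEquiv.toLp 2 (Fin N → ℝ)).symm).comp (hpi.comp e)

/-! ### Norm identities -/

lemma norm_reflA_sub_reflA (x y : EuclideanSpace ℝ (Fin N)) :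
    ‖reflA a x - reflA a y‖ = ‖x - y‖ := by
  rw [EuclideanSpace.norm_eq, EuclideanSpace.norm_eq]
  congr 1
  refine Finset.sum_congr rfl fun i _ => ?_
  by_cases h : i = 0
  · subst h
    simp only [PiLp.sub_apply, reflA_apply, if_pos rfl, eq_self_iff_true, if_true,
      Real.norm_eq_abs, sq_abs]
    ring
  · simp only [PiLp.sub_apply, reflA_apply, if_neg h]

lemma norm_reflA_sub (x y : EuclideanSpace ℝ (Fin N)) :
    ‖reflA a x - y‖ = ‖x - reflA a y‖ := by
  rw [EuclideanSpace.norm_eq, EuclideanSpace.norm_eq]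
  congr 1
  refine Finset.sum_congr rfl fun i _ => ?_
  by_cases h : i = 0
  · subst h
    simp only [PiLp.sub_apply, reflA_apply, if_pos rfl, eq_self_iff_true, if_true,
      Real.norm_eq_abs, sq_abs]
    ring
  · simp only [PiLp.sub_apply, reflA_apply, if_neg h]

lemma normsq_reflA (x y : EuclideanSpace ℝ (Fin N)) :
    ‖x - reflA a y‖ ^ 2 = ‖x - y‖ ^ 2 + 4 * (x 0 - a) * (y 0 - a) := by
  rw [EuclideanSpace.norm_eq, EuclideanSpace.norm_eq,
    Real.sq_sqrt (by positivity), Real.sq_sqrt (by positivity)]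
  have key : ∀ i : Fin N, ‖(x - reflA a y) i‖ ^ 2
      = ‖(x - y) i‖ ^ 2 + (if i = 0 then 4 * (x 0 - a) * (y 0 - a) else 0) := by
    intro i
    by_cases h : i = 0
    · subst h
      simp only [PiLp.sub_apply, reflA_apply, if_pos rfl, eq_self_iff_true, if_true,
        Real.norm_eq_abs, sq_abs]
      ring
    · simp only [PiLp.sub_apply, reflA_apply, if_neg h, add_zero]
  rw [Finset.sum_congr rfl fun i _ => key i, Finset.sum_add_distrib,
    Finset.sum_ite_eq' Finset.univ (0 : Fin N)]
  simp

lemma norm_le_same_side {x y : EuclideanSpace ℝ (Fin N)}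
    (h : 0 ≤ (x 0 - a) * (y 0 - a)) : ‖x - y‖ ≤ ‖x - reflA a y‖ := by
  have hsq := normsq_reflA a x y
  nlinarith [norm_nonneg (x - reflA a y), norm_nonneg (x - y)]

lemma norm_le_opp_side {x y : EuclideanSpace ℝ (Fin N)}
    (h : (x 0 - a) * (y 0 - a) ≤ 0) : ‖x - reflA a y‖ ≤ ‖x - y‖ := by
  have hsq := normsq_reflA a x y
  nlinarith [norm_nonneg (x - reflA a y), norm_nonneg (x - y)]

/-! ### Pointwise values of the polarization -/

variable (u : EuclideanSpace ℝ (Fin N) → ℝ)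

lemma pol_of_le {x : EuclideanSpace ℝ (Fin N)} (h : a ≤ x 0) :
    pol a u x = min (u x) (u (reflA a x)) := if_pos h

lemma pol_of_lt {x : EuclideanSpace ℝ (Fin N)} (h : x 0 < a) :
    pol a u x = max (u x) (u (reflA a x)) := if_neg (not_le.2 h)

lemma pol_reflA_of_le {x : EuclideanSpace ℝ (Fin N)} (h : a ≤ x 0) :
    pol a u (reflA a x) = max (u x) (u (reflA a x)) := by
  rcases eq_or_lt_of_le h with h' | h'
  · have hx : reflA a x = x := by
      ext i
      by_cases hi : i = 0
      · subst hi; simp [reflA, ← h']; ring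
      · simp [reflA, hi]
    simp [pol, hx, h]
  · have h0 : (reflA a x) 0 < a := by rw [reflA_zero]; linarith
    rw [pol_of_lt a u h0, reflA_reflA, max_comm]

lemma pol_reflA_of_lt {x : EuclideanSpace ℝ (Fin N)} (h : x 0 < a) :
    pol a u (reflA a x) = min (u x) (u (reflA a x)) := by
  have h0 : a ≤ (reflA a x) 0 := by rw [reflA_zero]; linarith
  rw [pol_of_le a u h0, reflA_reflA, min_comm]

lemma sq_pol_sub (x : EuclideanSpace ℝ (Fin N)) :
    (pol a u x - pol a u (reflA a x)) ^ 2 = (u x - u (reflA a x)) ^ 2 := by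
  rcases le_or_gt a (x 0) with h | h
  · rw [pol_of_le a u h, pol_reflA_of_le a u h]
    rcases le_total (u x) (u (reflA a x)) with h' | h' <;>
      simp only [min_eq_left h', min_eq_right h', max_eq_left h', max_eq_right h'] <;>
      ring
  · rw [pol_of_lt a u h, pol_reflA_of_lt a u h]
    rcases le_total (u x) (u (reflA a x)) with h' | h' <;>
      simp only [min_eq_left h', min_eq_right h', max_eq_left h', max_eq_right h'] <;>
      ring

/-! ### The two-point rearrangement inequality -/

lemma master_key (A B C D k₁ k₂ P Q R S : ℝ)
    (hcase :
      (k₂ ≤ k₁ ∧ ((P = min A B ∧ Q = max A B ∧ R = min C D ∧ S = max C D)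
                ∨ (P = max A B ∧ Q = min A B ∧ R = max C D ∧ S = min C D)))
    ∨ (k₁ ≤ k₂ ∧ ((P = min A B ∧ Q = max A B ∧ R = max C D ∧ S = min C D)
                ∨ (P = max A B ∧ Q = min A B ∧ R = min C D ∧ S = max C D)))) :
    (P - R) ^ 2 * k₁ + (Q - S) ^ 2 * k₁ + (Q - R) ^ 2 * k₂ + (P - S) ^ 2 * k₂
      ≤ (A - C) ^ 2 * k₁ + (B - D) ^ 2 * k₁ + (B - C) ^ 2 * k₂ + (A - D) ^ 2 * k₂ := by
  obtain ⟨hk, h⟩ | ⟨hk, h⟩ := hcase <;>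
    obtain ⟨hP, hQ, hR, hS⟩ | ⟨hP, hQ, hR, hS⟩ := h <;>
      subst hP <;> subst hQ <;> subst hR <;> subst hS <;>
        rcases le_total A B with h1 | h1 <;> rcases le_total C D with h2 | h2 <;>
          simp only [min_eq_left h1, min_eq_right h1, max_eq_left h1, max_eq_right h1,
            min_eq_left h2, min_eq_right h2, max_eq_left h2, max_eq_right h2] <;>
          nlinarith [mul_nonneg (sub_nonneg.2 hk) (mul_nonneg (sub_nonneg.2 h1) (sub_nonneg.2 h2))]

lemma kernel_le {p : ℝ} (hp : 0 < p) {x y : EuclideanSpace ℝ (Fin N)}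
    (h : ‖x - y‖ ≤ ‖x - reflA a y‖) (hxy : x ≠ y) :
    (‖x - reflA a y‖ ^ p)⁻¹ ≤ (‖x - y‖ ^ p)⁻¹ := by
  have h1 : 0 < ‖x - y‖ := by rw [norm_sub_pos_iff]; exact hxy
  exact inv_anti₀ (Real.rpow_pos_of_pos h1 p)
    (Real.rpow_le_rpow (norm_nonneg _) h hp.le)

/-! ### The key pointwise inequality for the four-fold symmetrized integrand -/

lemma pointwise_ineq {p : ℝ} (hp : 0 < p) (x y : EuclideanSpace ℝ (Fin N)) :
    ENNReal.ofReal ((pol a u x - pol a u y) ^ 2 / ‖x - y‖ ^ p)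
      + ENNReal.ofReal ((pol a u (reflA a x) - pol a u (reflA a y)) ^ 2 / ‖reflA a x - reflA a y‖ ^ p)
      + ENNReal.ofReal ((pol a u (reflA a x) - pol a u y) ^ 2 / ‖reflA a x - y‖ ^ p)
      + ENNReal.ofReal ((pol a u x - pol a u (reflA a y)) ^ 2 / ‖x - reflA a y‖ ^ p)
    ≤ ENNReal.ofReal ((u x - u y) ^ 2 / ‖x - y‖ ^ p)
      + ENNReal.ofReal ((u (reflA a x) - u (reflA a y)) ^ 2 / ‖reflA a x - reflA a y‖ ^ p)
      + ENNReal.ofReal ((u (reflA a x) - u y) ^ 2 / ‖reflA a x - y‖ ^ p)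
      + ENNReal.ofReal ((u x - u (reflA a y)) ^ 2 / ‖x - reflA a y‖ ^ p) := by
  rw [norm_reflA_sub_reflA a x y, norm_reflA_sub a x y]
  rw [← ENNReal.ofReal_add (by positivity) (by positivity),
    ← ENNReal.ofReal_add (by positivity) (by positivity),
    ← ENNReal.ofReal_add (by positivity) (by positivity),
    ← ENNReal.ofReal_add (by positivity) (by positivity),
    ← ENNReal.ofReal_add (by positivity) (by positivity),
    ← ENNReal.ofReal_add (by positivity) (by positivity)]
  apply ENNReal.ofReal_le_ofReal
  simp only [div_eq_mul_inv]
  by_cases hxy : x = y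
  · subst hxy
    have hsq := sq_pol_sub a u x
    linear_combination (2 * (‖x - reflA a x‖ ^ p)⁻¹) * hsq
  by_cases hyx : y = reflA a x
  · subst hyx
    rw [reflA_reflA a x]
    have hsq := sq_pol_sub a u x
    linear_combination (2 * (‖x - reflA a x‖ ^ p)⁻¹) * hsq
  have hxry : x ≠ reflA a y := by
    intro hc
    exact hyx (by rw [hc, reflA_reflA])
  rcases le_or_gt a (x 0) with hx | hx <;> rcases le_or_gt a (y 0) with hy | hy
  · have hk : (‖x - reflA a y‖ ^ p)⁻¹ ≤ (‖x - y‖ ^ p)⁻¹ :=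
      kernel_le a hp (norm_le_same_side a (mul_nonneg (by linarith) (by linarith))) hxy
    exact master_key (u x) (u (reflA a x)) (u y) (u (reflA a y)) _ _ _ _ _ _
      (Or.inl ⟨hk, Or.inl ⟨pol_of_le a u hx, pol_reflA_of_le a u hx,
        pol_of_le a u hy, pol_reflA_of_le a u hy⟩⟩)
  · have hk : (‖x - y‖ ^ p)⁻¹ ≤ (‖x - reflA a y‖ ^ p)⁻¹ := by
      have h1 : 0 < ‖x - reflA a y‖ := by rw [norm_sub_pos_iff]; exact hxry
      exact inv_anti₀ (Real.rpow_pos_of_pos h1 p)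
        (Real.rpow_le_rpow (norm_nonneg _)
          (norm_le_opp_side a (mul_nonpos_iff.2 (Or.inl ⟨by linarith, by linarith⟩))) hp.le)
    exact master_key (u x) (u (reflA a x)) (u y) (u (reflA a y)) _ _ _ _ _ _
      (Or.inr ⟨hk, Or.inl ⟨pol_of_le a u hx, pol_reflA_of_le a u hx,
        pol_of_lt a u hy, pol_reflA_of_lt a u hy⟩⟩)
  · have hk : (‖x - y‖ ^ p)⁻¹ ≤ (‖x - reflA a y‖ ^ p)⁻¹ := by
      have h1 : 0 < ‖x - reflA a y‖ := by rw [norm_sub_pos_iff]; exact hxry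
      exact inv_anti₀ (Real.rpow_pos_of_pos h1 p)
        (Real.rpow_le_rpow (norm_nonneg _)
          (norm_le_opp_side a (mul_nonpos_iff.2 (Or.inr ⟨by linarith, by linarith⟩))) hp.le)
    exact master_key (u x) (u (reflA a x)) (u y) (u (reflA a y)) _ _ _ _ _ _
      (Or.inr ⟨hk, Or.inr ⟨pol_of_lt a u hx, pol_reflA_of_lt a u hx,
        pol_of_le a u hy, pol_reflA_of_le a u hy⟩⟩)
  · have hk : (‖x - reflA a y‖ ^ p)⁻¹ ≤ (‖x - y‖ ^ p)⁻¹ :=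
      kernel_le a hp (norm_le_same_side a
        (by nlinarith : (0:ℝ) ≤ (x 0 - a) * (y 0 - a))) hxy
    exact master_key (u x) (u (reflA a x)) (u y) (u (reflA a y)) _ _ _ _ _ _
      (Or.inl ⟨hk, Or.inr ⟨pol_of_lt a u hx, pol_reflA_of_lt a u hx,
        pol_of_lt a u hy, pol_reflA_of_lt a u hy⟩⟩)

end Aux

section Integrals

variable {N : ℕ} [NeZero N] (a : ℝ)

/-- The integrand of the Gagliardo seminorm. -/
noncomputable def oF (w : EuclideanSpace ℝ (Fin N) → ℝ) (p : ℝ)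
    (x y : EuclideanSpace ℝ (Fin N)) : ENNReal :=
  ENNReal.ofReal ((w x - w y) ^ 2 / ‖x - y‖ ^ p)

lemma oF_meas {w : EuclideanSpace ℝ (Fin N) → ℝ} (hw : Measurable w) {p : ℝ} (hp : 0 < p) :
    Measurable (fun q : EuclideanSpace ℝ (Fin N) × EuclideanSpace ℝ (Fin N) =>
      oF w p q.1 q.2) := by
  apply ENNReal.measurable_ofReal.comp
  apply Measurable.div
  · exact ((hw.comp measurable_fst).sub (hw.comp measurable_snd)).pow_const 2
  · exact ((continuous_fst.sub continuous_snd).norm.rpow_const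
      (fun q => Or.inr hp.le)).measurable

lemma gag_eq (s : ℝ) (w : EuclideanSpace ℝ (Fin N) → ℝ) :
    gag N s w = ∫⁻ x, ∫⁻ y, oF w ((N : ℝ) + 2 * s) x y := rfl

lemma meas_proj : Measurable (fun x : EuclideanSpace ℝ (Fin N) => x 0) :=
  (measurable_pi_apply 0).comp (MeasurableEquiv.toLp 2 (Fin N → ℝ)).symm.measurable

lemma pol_measurable {w : EuclideanSpace ℝ (Fin N) → ℝ} (hw : Measurable w) :
    Measurable (pol a w) := by
  have hσ : Measurable (reflA (N := N) a) := (reflA_measurePreserving a).measurable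
  have h1 : Measurable fun x : EuclideanSpace ℝ (Fin N) => min (w x) (w (reflA a x)) :=
    hw.min (hw.comp hσ)
  have h2 : Measurable fun x : EuclideanSpace ℝ (Fin N) => max (w x) (w (reflA a x)) :=
    hw.max (hw.comp hσ)
  have hs : MeasurableSet {x : EuclideanSpace ℝ (Fin N) | a ≤ x 0} :=
    measurableSet_le measurable_const meas_proj
  exact Measurable.ite hs h1 h2

set_option maxHeartbeats 1000000 in
lemma sum4 {w : EuclideanSpace ℝ (Fin N) → ℝ} (hw : Measurable w) {p : ℝ} (hp : 0 < p) :
    (∫⁻ x, ∫⁻ y, (oF w p x y + oF w p (reflA a x) (reflA a y)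
        + oF w p (reflA a x) y + oF w p x (reflA a y)))
      = 4 * ∫⁻ x, ∫⁻ y, oF w p x y := by
  have hσ := reflA_measurePreserving (N := N) a
  have hF := oF_meas hw hp
  have hmy : ∀ x, Measurable fun y => oF w p x y := by
    intro x
    exact hF.comp (measurable_prodMk_left)
  have hG : Measurable fun x => ∫⁻ y, oF w p x y := hF.lintegral_prod_right'
  have hmy2 : ∀ x, Measurable fun y => oF w p x (reflA a y) :=
    fun x => (hmy x).comp hσ.measurable
  have hmy3 : ∀ x, Measurable fun y => oF w p (reflA a x) (reflA a y) :=
    fun x => (hmy (reflA a x)).comp hσ.measurable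
  have hG2 : Measurable fun x => ∫⁻ y, oF w p (reflA a x) y := hG.comp hσ.measurable
  have step1 : ∀ x : EuclideanSpace ℝ (Fin N),
      (∫⁻ y, (oF w p x y + oF w p (reflA a x) (reflA a y)
        + oF w p (reflA a x) y + oF w p x (reflA a y)))
      = 2 * (∫⁻ y, oF w p x y) + 2 * (∫⁻ y, oF w p (reflA a x) y) := by
    intro x
    rw [lintegral_add_right _ (hmy2 x),
      lintegral_add_right _ (hmy (reflA a x)),
      lintegral_add_right _ (hmy3 x),
      hσ.lintegral_comp (hmy x), hσ.lintegral_comp (hmy (reflA a x))]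
    ring
  rw [lintegral_congr step1, lintegral_add_right _ (hG2.const_mul 2),
    lintegral_const_mul 2 hG, lintegral_const_mul 2 hG2,
    hσ.lintegral_comp hG]
  ring

lemma gag_congr {s : ℝ} {u v : EuclideanSpace ℝ (Fin N) → ℝ} (h : u =ᵐ[volume] v) :
    gag N s u = gag N s v := by
  unfold gag
  refine lintegral_congr_ae ?_
  filter_upwards [h] with x hx
  refine lintegral_congr_ae ?_
  filter_upwards [h] with y hy
  rw [hx, hy]

end Integrals

theorem polarization_decreases_gagliardo {N : ℕ} [NeZero N] (s a : ℝ)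
    (hs : s ∈ Set.Ioo (0 : ℝ) 1) (u : EuclideanSpace ℝ (Fin N) → ℝ)
    (hu2 : MemLp u 2 volume) (hugag : gag N s u < ⊤) :
    gag N s (pol a u) ≤ gag N s u ∧
    MemLp (pol a u) 2 volume ∧ gag N s (pol a u) < ⊤ := by
  obtain ⟨hs0, _⟩ := hs
  have hp : 0 < (N : ℝ) + 2 * s := by
    have h1 : (1 : ℝ) ≤ (N : ℝ) := by
      exact_mod_cast Nat.one_le_iff_ne_zero.2 (NeZero.ne N)
    linarith
  have hσ := reflA_measurePreserving (N := N) a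
  have ham := hu2.aestronglyMeasurable
  have hm : Measurable (ham.mk u) := ham.stronglyMeasurable_mk.measurable
  have hae : u =ᵐ[volume] ham.mk u := ham.ae_eq_mk
  have haeσ : (fun x => u (reflA a x)) =ᵐ[volume] (fun x => ham.mk u (reflA a x)) :=
    hσ.quasiMeasurePreserving.ae_eq_comp hae
  have haepol : pol a u =ᵐ[volume] pol a (ham.mk u) := by
    filter_upwards [hae, haeσ] with x h1 h2
    simp only [pol, h1]
    rw [show u (reflA a x) = ham.mk u (reflA a x) from h2]
  have hgagu : gag N s u = gag N s (ham.mk u) := gag_congr hae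
  have hgagv : gag N s (pol a u) = gag N s (pol a (ham.mk u)) := gag_congr haepol
  have hmain : gag N s (pol a (ham.mk u)) ≤ gag N s (ham.mk u) := by
    have hv := pol_measurable a hm
    have h4 : 4 * gag N s (pol a (ham.mk u)) ≤ 4 * gag N s (ham.mk u) := by
      rw [gag_eq, gag_eq, ← sum4 a hv hp, ← sum4 a hm hp]
      exact lintegral_mono fun x => lintegral_mono fun y =>
        pointwise_ineq a (ham.mk u) hp x y
    exact (ENNReal.mul_le_mul_iff_right (by norm_num) (by norm_num)).1 h4
  have hone : gag N s (pol a u) ≤ gag N s u := by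
    rw [hgagv, hgagu]; exact hmain
  refine ⟨hone, ?_, lt_of_le_of_lt hone hugag⟩
  have hg : MemLp (fun x => ‖u x‖ + ‖u (reflA a x)‖) 2 volume :=
    hu2.norm.add ((hu2.comp_measurePreserving hσ).norm)
  have hmv : AEStronglyMeasurable (pol a u) volume :=
    (pol_measurable a hm).aestronglyMeasurable.congr haepol.symm
  refine MemLp.of_le hg hmv (Filter.Eventually.of_forall fun x => ?_)
  have hb : |pol a u x| ≤ |u x| + |u (reflA a x)| := by
    have h1 : |min (u x) (u (reflA a x))| ≤ |u x| + |u (reflA a x)| :=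
      (abs_min_le_max_abs_abs).trans
        (max_le (le_add_of_nonneg_right (abs_nonneg _)) (le_add_of_nonneg_left (abs_nonneg _)))
    have h2 : |max (u x) (u (reflA a x))| ≤ |u x| + |u (reflA a x)| :=
      (abs_max_le_max_abs_abs).trans
        (max_le (le_add_of_nonneg_right (abs_nonneg _)) (le_add_of_nonneg_left (abs_nonneg _)))
    by_cases h : a ≤ x 0
    · rw [pol_of_le a u h]; exact h1
    · rw [pol_of_lt a u (not_le.1 h)]; exact h2
  simp only [Real.norm_eq_abs]
  rw [abs_of_nonneg (add_nonneg (abs_nonneg (u x)) (abs_nonneg (u (reflA a x))))]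
  exact hb
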